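/- Let e < a < b < d be real numbers with e + d = a + b (so that the chord DE of the parabola y = x² is parallel to the chord AB). Then the line AD (with equation y = (a + d)x − ad) and the line EB (with equation y = (e + b)x − eb) intersect in a unique point C, and the first coordinate of C equals (a + b)/2. Hence the vertical (singular) line through C bisects the DA length of the segment AB. -/
import Mathlib

/-- DA version of Brahmagupta's theorem: with `e < a < b < d` on `y = x²` and
`e + d = a + b` (so chord `DE ∥ AB`), the chords `AD : y = (a+d)x − ad` and
`EB : y = (e+b)x − eb` intersect in a unique point `C`, and `C.1 = (a+b)/2`:
the singular (vertical) line through `C` bisects the DA length of `AB`. -/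
theorem da_brahmagupta (e a b d : ℝ)
    (hea : e < a) (hab : a < b) (hbd : b < d) (hpar : e + d = a + b) :
    (∃! C : ℝ × ℝ,
        C.2 = (a + d) * C.1 - a * d ∧ C.2 = (e + b) * C.1 - e * b) ∧
    ∀ C : ℝ × ℝ,
      C.2 = (a + d) * C.1 - a * d → C.2 = (e + b) * C.1 - e * b →
      C.1 = (a + b) / 2 := by
  have he : a - e ≠ 0 := by linarith
  have hd : d = a + b - e := by linarith
  have key : ∀ C : ℝ × ℝ,
      C.2 = (a + d) * C.1 - a * d → C.2 = (e + b) * C.1 - e * b →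
      C.1 = (a + b) / 2 := by
    intro C h1 h2
    have h3 : (a - e) * (2 * C.1 - (a + b)) = 0 := by
      subst hd; nlinarith [h1, h2]
    rcases mul_eq_zero.1 h3 with h | h
    · exact absurd h he
    · linarith
  refine ⟨⟨((a + b) / 2, (a + d) * ((a + b) / 2) - a * d), ⟨rfl, ?_⟩, ?_⟩, key⟩
  · subst hd; ring
  · rintro C ⟨h1, h2⟩
    have hx := key C h1 h2
    have : C.2 = (a + d) * ((a + b) / 2) - a * d := by rw [← hx]; exact h1
    exact Prod.ext hx this
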